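/- Let P₁ and P₂ be locally compact Hausdorff spaces, let (x_j)_{j∈J} in C₀(P₁) be a frame with bounds 0 < d₁ ≤ d₂ in the state sense, and let (y_i)_{i∈I} in C₀(P₂) be a frame with bounds 0 < c₁ ≤ c₂ in the state sense. Let K = P₁ ⊔ P₂ be the topological disjoint union and extend each x_j and each y_i to K by zero on the other summand. Then the combined family (x_j)_{j∈J} ∪ (y_i)_{i∈I} ⊆ C₀(K) is a frame in C₀(K) in the state sense with bounds min(d₁, c₁) and max(d₂, c₂): for every regular Borel probability measure μ on K and every w ∈ C₀(K), the family of integrals of |w·x_j|² and |w·y_i|² over K against μ is summable and min(d₁,c₁)·∫_K |w|² dμ ≤ (the total sum) ≤ max(d₂,c₂)·∫_K |w|² dμ. -/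

import Mathlib

open ZeroAtInfty MeasureTheory
open scoped ENNReal

/-- A family `(x j)` in `C₀(K, ℂ)` is a frame with bounds `0 < c₁ ≤ c₂` in the state sense:
for every regular Borel probability measure `μ` on `K` and every `v ∈ C₀(K)` the family
`(∫ ‖v · x j‖² dμ)` is summable and
`c₁ · ∫ ‖v‖² dμ ≤ ∑' j, ∫ ‖v · x j‖² dμ ≤ c₂ · ∫ ‖v‖² dμ`. -/
def IsStateFrame {K : Type*} [TopologicalSpace K] [MeasurableSpace K] {J : Type*}
    (x : J → C₀(K, ℂ)) (c₁ c₂ : ℝ) : Prop :=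
  ∀ μ : Measure K, IsProbabilityMeasure μ → μ.Regular →
    ∀ v : C₀(K, ℂ),
      Summable (fun j : J => ∫ t, ‖v t * x j t‖ ^ 2 ∂μ) ∧
      c₁ * (∫ t, ‖v t‖ ^ 2 ∂μ) ≤ (∑' j : J, ∫ t, ‖v t * x j t‖ ^ 2 ∂μ) ∧
      (∑' j : J, ∫ t, ‖v t * x j t‖ ^ 2 ∂μ) ≤ c₂ * ∫ t, ‖v t‖ ^ 2 ∂μ

open Filter Set Topology in
private lemma my_hasSum_sumElim {J I : Type*} {f : J → ℝ} {g : I → ℝ} {a b : ℝ}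
    (hf : HasSum f a) (hg : HasSum g b) : HasSum (Sum.elim f g) (a + b) := by
  refine HasSum.add_isCompl Set.isCompl_range_inl_range_inr ?_ ?_
  · refine (Equiv.hasSum_iff (Equiv.ofInjective (Sum.inl : J → J ⊕ I) Sum.inl_injective)).mp ?_
    exact hf
  · refine (Equiv.hasSum_iff (Equiv.ofInjective (Sum.inr : I → J ⊕ I) Sum.inr_injective)).mp ?_
    exact hg

open Set Topology in
private lemma my_regular_comap {α β : Type*} [TopologicalSpace α] [TopologicalSpace β]
    [MeasurableSpace α] [BorelSpace α] [MeasurableSpace β] [BorelSpace β]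
    {f : α → β} (hfo : IsOpenEmbedding f) (hfc : IsClosedEmbedding f)
    (μ : Measure β) [IsFiniteMeasure μ] (hreg : μ.Regular) :
    (μ.comap f).Regular := by
  have hme : MeasurableEmbedding f := hfo.measurableEmbedding
  have happ : ∀ s : Set α, (μ.comap f) s = μ (f '' s) := fun s => hme.comap_apply μ s
  haveI hfin : IsFiniteMeasure (μ.comap f) :=
    ⟨by rw [happ]; exact measure_lt_top _ _⟩
  haveI houter : (μ.comap f).OuterRegular := by
    constructor
    intro A hA r hr
    rw [happ] at hr
    obtain ⟨V, hAV, hVopen, hVlt⟩ :=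
      hreg.outerRegular (hme.measurableSet_image' hA) r hr
    refine ⟨f ⁻¹' V, fun a ha => hAV (Set.mem_image_of_mem f ha),
      hVopen.preimage hfo.continuous, ?_⟩
    rw [happ]
    refine lt_of_le_of_lt (measure_mono ?_) hVlt
    rw [Set.image_preimage_eq_inter_range]
    exact Set.inter_subset_left
  refine ⟨?_⟩
  intro U hU r hr
  rw [happ] at hr
  obtain ⟨K, hKU, hKc, hrK⟩ := hreg.innerRegular (hfo.isOpenMap U hU) r hr
  have hKr : K ⊆ Set.range f := hKU.trans (Set.image_subset_range _ _)
  refine ⟨f ⁻¹' K, ?_, hfc.isProperMap.isCompact_preimage hKc, ?_⟩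
  · intro a ha
    obtain ⟨u, hu, hufa⟩ := hKU ha
    exact hfo.injective hufa ▸ hu
  · rw [happ, Set.image_preimage_eq_inter_range, Set.inter_eq_self_of_subset_left hKr]
    exact hrK

open Filter Set Topology in
private lemma my_frame_side {P : Type*} [TopologicalSpace P] [MeasurableSpace P] {J : Type*}
    {x : J → C₀(P, ℂ)} {d₁ d₂ : ℝ} (hx : IsStateFrame x d₁ d₂)
    (ν : Measure P) [IsFiniteMeasure ν] (hν : ν.Regular) (w : C₀(P, ℂ)) :
    Summable (fun j : J => ∫ t, ‖w t * x j t‖ ^ 2 ∂ν) ∧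
    d₁ * (∫ t, ‖w t‖ ^ 2 ∂ν) ≤ (∑' j : J, ∫ t, ‖w t * x j t‖ ^ 2 ∂ν) ∧
    (∑' j : J, ∫ t, ‖w t * x j t‖ ^ 2 ∂ν) ≤ d₂ * ∫ t, ‖w t‖ ^ 2 ∂ν := by
  by_cases ha : ν Set.univ = 0
  · have hz : ν = 0 := Measure.measure_univ_eq_zero.mp ha
    subst hz
    simp [summable_zero]
  · have haT : ν Set.univ ≠ ∞ := measure_ne_top ν _
    set a : ENNReal := ν Set.univ with ha'
    haveI hprob : IsProbabilityMeasure (a⁻¹ • ν) :=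
      ⟨by simp [Measure.smul_apply, ENNReal.inv_mul_cancel ha haT]; exact ENNReal.inv_mul_cancel ha haT⟩
    have hregs : (a⁻¹ • ν).Regular := by
      haveI := hν
      exact Measure.Regular.smul (ENNReal.inv_ne_top.mpr ha)
    obtain ⟨hsum, hlow, hup⟩ := hx (a⁻¹ • ν) hprob hregs w
    set r : ℝ := a.toReal with hr'
    have hrpos : 0 < r := ENNReal.toReal_pos ha haT
    simp only [integral_smul_measure, ENNReal.toReal_inv, smul_eq_mul] at hsum hlow hup
    have hsum' : Summable (fun j : J => ∫ t, ‖w t * x j t‖ ^ 2 ∂ν) := by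
      have := hsum.mul_left r
      refine this.congr fun j => ?_
      field_simp
      rw [← hr', mul_div_cancel_left₀ _ hrpos.ne']
    refine ⟨hsum', ?_, ?_⟩
    · have htsum : (∑' j : J, r⁻¹ * ∫ t, ‖w t * x j t‖ ^ 2 ∂ν)
          = r⁻¹ * ∑' j : J, ∫ t, ‖w t * x j t‖ ^ 2 ∂ν := tsum_mul_left
      rw [htsum] at hlow
      have := mul_le_mul_of_nonneg_left hlow hrpos.le
      calc d₁ * ∫ t, ‖w t‖ ^ 2 ∂ν = r * (d₁ * (r⁻¹ * ∫ t, ‖w t‖ ^ 2 ∂ν)) := by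
            field_simp
        _ ≤ r * (r⁻¹ * ∑' j : J, ∫ t, ‖w t * x j t‖ ^ 2 ∂ν) := this
        _ = ∑' j : J, ∫ t, ‖w t * x j t‖ ^ 2 ∂ν := by field_simp
    · have htsum : (∑' j : J, r⁻¹ * ∫ t, ‖w t * x j t‖ ^ 2 ∂ν)
          = r⁻¹ * ∑' j : J, ∫ t, ‖w t * x j t‖ ^ 2 ∂ν := tsum_mul_left
      rw [htsum] at hup
      have := mul_le_mul_of_nonneg_left hup hrpos.le
      calc (∑' j : J, ∫ t, ‖w t * x j t‖ ^ 2 ∂ν)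
          = r * (r⁻¹ * ∑' j : J, ∫ t, ‖w t * x j t‖ ^ 2 ∂ν) := by field_simp
        _ ≤ r * (d₂ * (r⁻¹ * ∫ t, ‖w t‖ ^ 2 ∂ν)) := this
        _ = d₂ * ∫ t, ‖w t‖ ^ 2 ∂ν := by field_simp

/-- Let `(x j)` be a frame in `C₀(P₁)` with bounds `0 < d₁ ≤ d₂` and `(y i)` a frame in
`C₀(P₂)` with bounds `0 < c₁ ≤ c₂`, both in the state sense. Extending each family by zero
to the topological disjoint union `K = P₁ ⊔ P₂`, the combined family indexed by `J ⊕ I`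
is a frame in `C₀(K)` in the state sense with bounds `min d₁ c₁` and `max d₂ c₂`. -/
theorem isStateFrame_sum
    (P₁ : Type*) [TopologicalSpace P₁] [LocallyCompactSpace P₁] [T2Space P₁]
    [MeasurableSpace P₁] [BorelSpace P₁]
    (P₂ : Type*) [TopologicalSpace P₂] [LocallyCompactSpace P₂] [T2Space P₂]
    [MeasurableSpace P₂] [BorelSpace P₂]
    [MeasurableSpace (P₁ ⊕ P₂)] [BorelSpace (P₁ ⊕ P₂)]
    {J I : Type*}
    (x : J → C₀(P₁, ℂ)) (d₁ d₂ : ℝ) (hd₁ : 0 < d₁) (hd₁₂ : d₁ ≤ d₂)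
    (hx : IsStateFrame x d₁ d₂)
    (y : I → C₀(P₂, ℂ)) (c₁ c₂ : ℝ) (hc₁ : 0 < c₁) (hc₁₂ : c₁ ≤ c₂)
    (hy : IsStateFrame y c₁ c₂)
    (x' : J → C₀(P₁ ⊕ P₂, ℂ)) (y' : I → C₀(P₁ ⊕ P₂, ℂ))
    (hx' : ∀ (j : J), (∀ t : P₁, x' j (Sum.inl t) = x j t) ∧ ∀ t : P₂, x' j (Sum.inr t) = 0)
    (hy' : ∀ (i : I), (∀ t : P₂, y' i (Sum.inr t) = y i t) ∧ ∀ t : P₁, y' i (Sum.inl t) = 0) :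
    IsStateFrame (Sum.elim x' y') (min d₁ c₁) (max d₂ c₂) := by
  intro μ hprob hreg v
  classical
  have hoe1 : Topology.IsOpenEmbedding (Sum.inl : P₁ → P₁ ⊕ P₂) := Topology.IsOpenEmbedding.inl
  have hoe2 : Topology.IsOpenEmbedding (Sum.inr : P₂ → P₁ ⊕ P₂) := Topology.IsOpenEmbedding.inr
  have hce1 : Topology.IsClosedEmbedding (Sum.inl : P₁ → P₁ ⊕ P₂) := Topology.IsClosedEmbedding.inl
  have hce2 : Topology.IsClosedEmbedding (Sum.inr : P₂ → P₁ ⊕ P₂) := Topology.IsClosedEmbedding.inr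
  have hme1 : MeasurableEmbedding (Sum.inl : P₁ → P₁ ⊕ P₂) := hoe1.measurableEmbedding
  have hme2 : MeasurableEmbedding (Sum.inr : P₂ → P₁ ⊕ P₂) := hoe2.measurableEmbedding
  set ν₁ : Measure P₁ := μ.comap Sum.inl with hν₁
  set ν₂ : Measure P₂ := μ.comap Sum.inr with hν₂
  haveI hf₁ : IsFiniteMeasure ν₁ := ⟨by rw [hν₁, hme1.comap_apply]; exact measure_lt_top μ _⟩
  haveI hf₂ : IsFiniteMeasure ν₂ := ⟨by rw [hν₂, hme2.comap_apply]; exact measure_lt_top μ _⟩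
  have hreg₁ : ν₁.Regular := my_regular_comap hoe1 hce1 μ hreg
  have hreg₂ : ν₂.Regular := my_regular_comap hoe2 hce2 μ hreg
  -- restrictions of v
  set w₁ : C₀(P₁, ℂ) :=
    ⟨⟨fun t => v (Sum.inl t), (map_continuous v).comp continuous_inl⟩,
      (zero_at_infty v).comp hce1.tendsto_cocompact⟩ with hw₁
  set w₂ : C₀(P₂, ℂ) :=
    ⟨⟨fun t => v (Sum.inr t), (map_continuous v).comp continuous_inr⟩,
      (zero_at_infty v).comp hce2.tendsto_cocompact⟩ with hw₂
  -- integrability of squared norms of C₀ functions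
  have int_all : ∀ f : C₀(P₁ ⊕ P₂, ℂ), Integrable (fun t => ‖f t‖ ^ 2) μ := by
    intro f
    refine (integrable_const (‖f‖ ^ 2)).mono'
      (((map_continuous f).norm.pow 2).aestronglyMeasurable) ?_
    filter_upwards with t
    rw [Real.norm_of_nonneg (by positivity)]
    refine pow_le_pow_left₀ (norm_nonneg _) ?_ 2
    calc ‖f t‖ = ‖f.toBCF t‖ := rfl
      _ ≤ ‖f.toBCF‖ := f.toBCF.norm_coe_le_norm t
      _ = ‖f‖ := ZeroAtInftyContinuousMap.norm_toBCF_eq_norm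
  -- splitting integrals over the disjoint union
  have split : ∀ f : C₀(P₁ ⊕ P₂, ℂ), ∫ t, ‖f t‖ ^ 2 ∂μ
      = (∫ t, ‖f (Sum.inl t)‖ ^ 2 ∂ν₁) + ∫ t, ‖f (Sum.inr t)‖ ^ 2 ∂ν₂ := by
    intro f
    rw [← integral_add_compl hme1.measurableSet_range (int_all f), Set.compl_range_inl]
    congr 1
    · rw [← hme1.map_comap μ]; exact hme1.integral_map _
    · rw [← hme2.map_comap μ]; exact hme2.integral_map _
  set S₁ : J → ℝ := fun j => ∫ t, ‖w₁ t * x j t‖ ^ 2 ∂ν₁ with hS₁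
  set S₂ : I → ℝ := fun i => ∫ t, ‖w₂ t * y i t‖ ^ 2 ∂ν₂ with hS₂
  set A : ℝ := ∫ t, ‖w₁ t‖ ^ 2 ∂ν₁ with hA
  set B : ℝ := ∫ t, ‖w₂ t‖ ^ 2 ∂ν₂ with hB
  have hAB : ∫ t, ‖v t‖ ^ 2 ∂μ = A + B := split v
  have hterm : (fun j : J ⊕ I => ∫ t, ‖v t * (Sum.elim x' y') j t‖ ^ 2 ∂μ)
      = Sum.elim S₁ S₂ := by
    funext j
    cases j with
    | inl j =>
      have := split (v * x' j)
      simp only [ZeroAtInftyContinuousMap.coe_mul, Pi.mul_apply] at this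
      simp only [Sum.elim_inl]
      rw [this, hS₁]
      simp [(hx' j).1, (hx' j).2, hw₁]
    | inr i =>
      have := split (v * y' i)
      simp only [ZeroAtInftyContinuousMap.coe_mul, Pi.mul_apply] at this
      simp only [Sum.elim_inr]
      rw [this, hS₂]
      simp [(hy' i).1, (hy' i).2, hw₂]
  obtain ⟨hs₁, hl₁, hu₁⟩ := my_frame_side hx ν₁ hreg₁ w₁
  obtain ⟨hs₂, hl₂, hu₂⟩ := my_frame_side hy ν₂ hreg₂ w₂
  have hHS : HasSum (Sum.elim S₁ S₂) (∑' j, S₁ j + ∑' i, S₂ i) :=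
    my_hasSum_sumElim hs₁.hasSum hs₂.hasSum
  have hApos : 0 ≤ A := integral_nonneg fun t => by positivity
  have hBpos : 0 ≤ B := integral_nonneg fun t => by positivity
  have hT₁ : 0 ≤ ∑' j, S₁ j := le_trans (by positivity) hl₁
  refine ⟨?_, ?_, ?_⟩
  · rw [hterm]; exact hHS.summable
  · rw [hterm, hHS.tsum_eq, hAB]
    nlinarith [mul_le_mul_of_nonneg_right (min_le_left d₁ c₁) hApos,
      mul_le_mul_of_nonneg_right (min_le_right d₁ c₁) hBpos]
  · rw [hterm, hHS.tsum_eq, hAB]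
    nlinarith [mul_le_mul_of_nonneg_right (le_max_left d₂ c₂) hApos,
      mul_le_mul_of_nonneg_right (le_max_right d₂ c₂) hBpos]
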